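/- Let A = (a_1, …, a_k) be a collection of k sequences in ℤ^ℓ with ℓ ≥ 2, and suppose two distinct columns j and j' have a common ordering permutation, i.e., there is a permutation π of {1, …, k} with a_{π(1),j} ≤ … ≤ a_{π(k),j} and a_{π(1),j'} ≤ … ≤ a_{π(k),j'}. Let A' = (a'_1, …, a'_k) be the collection of sequences of length ℓ−1 obtained from A by deleting column j' and replacing the entry in column j by a'_{i,j} = a_{i,j} + a_{i,j'}. Then OPT(A) = OPT(A'). -/
import Mathlib


/-- Manhattan distance between two integer sequences with coordinates indexed by `ι`. -/
def manhattanDist {ι : Type} [Fintype ι] (x y : ι → ℤ) : ℤ := ∑ j, |x j - y j|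

/-- Manhattan distance from a sequence to a collection of `k` sequences. -/
def manhattanDistA {k : ℕ} {ι : Type} [Fintype ι] (hk : 0 < k) (a : Fin k → ι → ℤ)
    (x : ι → ℤ) : ℤ :=
  Finset.univ.sup' ⟨⟨0, hk⟩, Finset.mem_univ _⟩ fun i => manhattanDist x (a i)

/-- `OPT(A)`: the optimal (minimal) distance to the collection. -/
noncomputable def manhattanOPT {k : ℕ} {ι : Type} [Fintype ι] (hk : 0 < k)
    (a : Fin k → ι → ℤ) : ℤ :=
  sInf {d : ℤ | ∃ x : ι → ℤ, manhattanDistA hk a x = d}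

open Finset

private lemma abs_between {p q u : ℤ} (h1 : min p q ≤ u) (h2 : u ≤ max p q) :
    |u - p| + |q - u| = |q - p| := by
  rcases le_total p q with h | h
  · rw [min_eq_left h] at h1; rw [max_eq_right h] at h2
    rw [abs_of_nonneg (by omega), abs_of_nonneg (by omega), abs_of_nonneg (by omega)]; ring
  · rw [min_eq_right h] at h1; rw [max_eq_left h] at h2
    rw [abs_of_nonpos (by omega), abs_of_nonpos (by omega), abs_of_nonpos (by omega)]; ring

private lemma distA_nonneg {k : ℕ} {ι : Type} [Fintype ι] (hk : 0 < k) (a : Fin k → ι → ℤ)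
    (x : ι → ℤ) : 0 ≤ manhattanDistA hk a x := by
  refine le_trans ?_ (Finset.le_sup' _ (Finset.mem_univ (⟨0, hk⟩ : Fin k)))
  exact Finset.sum_nonneg fun m _ => abs_nonneg _

/-- if two distinct columns `j, j'` of the collection have a common
ordering permutation, then deleting column `j'` and adding its entries to column `j`
does not change the Manhattan consensus optimum. -/
theorem stmt4 {ℓ k : ℕ} (hℓ : 2 ≤ ℓ) (hk : 0 < k) (a : Fin k → Fin ℓ → ℤ)
    (j j' : Fin ℓ) (hjj : j ≠ j') (π : Equiv.Perm (Fin k))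
    (hmonoj : Monotone fun i => a (π i) j) (hmonoj' : Monotone fun i => a (π i) j')
    (a' : Fin k → {m : Fin ℓ // m ≠ j'} → ℤ)
    (haj : ∀ i, a' i ⟨j, hjj⟩ = a i j + a i j')
    (hao : ∀ i (m : Fin ℓ) (hm : m ≠ j'), m ≠ j → a' i ⟨m, hm⟩ = a i m) :
    manhattanOPT hk a = manhattanOPT hk a' := by
  classical
  have hjmem : j ∈ (Finset.univ : Finset (Fin ℓ)).erase j' :=
    Finset.mem_erase.mpr ⟨hjj, Finset.mem_univ j⟩
  -- splitting a full sum over Fin ℓ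
  have split_sum : ∀ f : Fin ℓ → ℤ,
      ∑ m, f m = f j' + (f j + ∑ m ∈ ((Finset.univ.erase j').erase j), f m) := by
    intro f
    rw [Finset.add_sum_erase _ f hjmem, Finset.add_sum_erase _ f (Finset.mem_univ j')]
  -- sum over the subtype
  have split_sum' : ∀ g : {m : Fin ℓ // m ≠ j'} → ℤ,
      ∑ m, g m = g ⟨j, hjj⟩ +
        ∑ m ∈ ((Finset.univ.erase j').erase j),
          (if h : m = j' then 0 else g ⟨m, h⟩) := by
    intro g
    have h1 : ∀ m : Fin ℓ, m ∈ Finset.univ.erase j' ↔ m ≠ j' := by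
      intro m; simp [Finset.mem_erase]
    have h2 := Finset.sum_subtype (p := fun m : Fin ℓ => m ≠ j') (F := inferInstance)
      (Finset.univ.erase j') h1 (fun m => if h : m = j' then 0 else g ⟨m, h⟩)
    have h3 : ∀ m : {m : Fin ℓ // m ≠ j'},
        (if h : (m : Fin ℓ) = j' then 0 else g ⟨(m : Fin ℓ), h⟩) = g m := by
      intro m; rw [dif_neg m.2]
    rw [Finset.sum_congr rfl (fun m _ => (h3 m).symm), ← h2,
      ← Finset.add_sum_erase _ _ hjmem, dif_neg hjj]
  have SAne : Set.Nonempty {d : ℤ | ∃ x : Fin ℓ → ℤ, manhattanDistA hk a x = d} :=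
    ⟨_, 0, rfl⟩
  have SA'ne : Set.Nonempty {d : ℤ | ∃ x : {m : Fin ℓ // m ≠ j'} → ℤ,
      manhattanDistA hk a' x = d} := ⟨_, 0, rfl⟩
  have SAbdd : BddBelow {d : ℤ | ∃ x : Fin ℓ → ℤ, manhattanDistA hk a x = d} :=
    ⟨0, by rintro d ⟨x, rfl⟩; exact distA_nonneg hk a x⟩
  have SA'bdd : BddBelow {d : ℤ | ∃ x : {m : Fin ℓ // m ≠ j'} → ℤ,
      manhattanDistA hk a' x = d} := ⟨0, by rintro d ⟨x, rfl⟩; exact distA_nonneg hk a' x⟩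
  refine le_antisymm ?_ ?_
  · -- OPT(A) ≤ OPT(A') : given x', build x with equal distA
    refine le_csInf SA'ne ?_
    rintro d ⟨x', rfl⟩
    set s : ℤ := x' ⟨j, hjj⟩ with hs
    set u : ℤ := Finset.univ.sup' ⟨⟨0, hk⟩, Finset.mem_univ _⟩
      (fun i => min (a i j) (s - a i j')) with hu
    have hub : ∀ i : Fin k, min (a i j) (s - a i j') ≤ u ∧ u ≤ max (a i j) (s - a i j') := by
      intro i
      constructor
      · exact Finset.le_sup' (fun i => min (a i j) (s - a i j')) (Finset.mem_univ i)
      · refine Finset.sup'_le _ _ ?_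
        intro t _
        rcases le_total (π.symm t) (π.symm i) with h | h
        · have := hmonoj h
          simp only [Equiv.apply_symm_apply] at this
          exact le_trans (min_le_left _ _) (le_trans this (le_max_left _ _))
        · have := hmonoj' h
          simp only [Equiv.apply_symm_apply] at this
          refine le_trans (min_le_right _ _) (le_trans (by omega) (le_max_right _ _))
    set x : Fin ℓ → ℤ := fun m => if h : m = j' then s - u else
      (if m = j then u else x' ⟨m, h⟩) with hx
    have hxj' : x j' = s - u := by simp [hx]
    have hxj : x j = u := by simp [hx, hjj]
    have hdist : ∀ i, manhattanDist x (a i) = manhattanDist x' (a' i) := by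
      intro i
      rw [manhattanDist, manhattanDist, split_sum, split_sum']
      have hrest : ∑ m ∈ ((Finset.univ.erase j').erase j), |x m - a i m| =
          ∑ m ∈ ((Finset.univ.erase j').erase j),
            (if h : m = j' then 0 else |x' ⟨m, h⟩ - a' i ⟨m, h⟩|) := by
        refine Finset.sum_congr rfl ?_
        intro m hm
        rw [Finset.mem_erase, Finset.mem_erase] at hm
        rw [dif_neg hm.2.1, hao i m hm.2.1 hm.1]
        congr 1
        simp [hx, hm.1, hm.2.1]
      rw [hrest, hxj', hxj, haj i]
      have h := hub i
      have := abs_between (p := a i j) (q := s - a i j') h.1 h.2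
      have h2 : |s - u - a i j'| = |s - a i j' - u| := by congr 1; ring
      have h3 : |s - a i j' - a i j| = |s - (a i j + a i j')| := by congr 1; ring
      rw [h2, ← hs]
      omega
    have hmem : manhattanDistA hk a' x' ∈
        {d : ℤ | ∃ x : Fin ℓ → ℤ, manhattanDistA hk a x = d} := by
      refine ⟨x, ?_⟩
      unfold manhattanDistA
      exact Finset.sup'_congr _ rfl fun i _ => hdist i
    exact csInf_le SAbdd hmem
  · -- OPT(A') ≤ OPT(A) : given x, build x' with distA' ≤ distA
    refine le_csInf SAne ?_
    rintro d ⟨x, rfl⟩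
    set x' : {m : Fin ℓ // m ≠ j'} → ℤ := fun m => if (m : Fin ℓ) = j then x j + x j' else x m
      with hx'
    have hle : manhattanDistA hk a' x' ≤ manhattanDistA hk a x := by
      refine Finset.sup'_mono_fun ?_
      intro i _
      rw [manhattanDist, manhattanDist, split_sum, split_sum']
      have hrest : ∑ m ∈ ((Finset.univ.erase j').erase j),
            (if h : m = j' then 0 else |x' ⟨m, h⟩ - a' i ⟨m, h⟩|) =
          ∑ m ∈ ((Finset.univ.erase j').erase j), |x m - a i m| := by
        refine Finset.sum_congr rfl ?_
        intro m hm
        rw [Finset.mem_erase, Finset.mem_erase] at hm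
        rw [dif_neg hm.2.1, hao i m hm.2.1 hm.1]
        congr 1
        simp [hx', hm.1]
      rw [hrest]
      have h1 : x' ⟨j, hjj⟩ = x j + x j' := by simp [hx']
      rw [h1, haj i]
      have := abs_add_le (x j - a i j) (x j' - a i j')
      have h2 : x j - a i j + (x j' - a i j') = x j + x j' - (a i j + a i j') := by ring
      rw [h2] at this
      omega
    exact le_trans (csInf_le SA'bdd ⟨x', rfl⟩) hle
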